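/- For every real s > 1/2, every integer N ≥ 1 and every index i ∈ {1,…,N} there exists a constant C > 0 such that for all functions v₁, …, v_N : ℤ → [0,∞): ( Σ_{k∈ℤ} ⟨k⟩^{2s} · ( Σ_{k₁+⋯+k_N = k} (max_{1≤j≤N} ⟨k_j⟩)^{-1} · Π_{l=1}^N v_l(k_l) )² )^{1/2} ≤ C · ( Σ_{k∈ℤ} ⟨k⟩^{2(s−1)} v_i(k)² )^{1/2} · Π_{l≠i} ( Σ_{k∈ℤ} ⟨k⟩^{2s} v_l(k)² )^{1/2}, where the inner sum ranges over all N-tuples (k₁,…,k_N) ∈ ℤ^N with k₁+⋯+k_N = k and all sums are interpreted in [0,∞]. -/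

import Mathlib

open scoped ENNReal NNReal BigOperators

/-- The Japanese bracket `⟨k⟩ = (1+k²)^{1/2}`, as an extended nonnegative real. -/
noncomputable def J (k : ℤ) : ℝ≥0∞ := ENNReal.ofReal (Real.sqrt (1 + (k : ℝ) ^ 2))

lemma one_le_sqrtJ (x : ℝ) : 1 ≤ Real.sqrt (1 + x ^ 2) := by
  have := Real.sqrt_le_sqrt (show (1:ℝ) ≤ 1 + x^2 by nlinarith)
  simpa using this

lemma one_le_J (k : ℤ) : 1 ≤ J k := by
  rw [J, show (1:ℝ≥0∞) = ENNReal.ofReal 1 by simp]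
  exact ENNReal.ofReal_le_ofReal (one_le_sqrtJ _)

lemma J_ne_zero (k : ℤ) : J k ≠ 0 := by
  intro h; simpa [h] using one_le_J k

lemma J_ne_top (k : ℤ) : J k ≠ ⊤ := ENNReal.ofReal_ne_top

lemma sqrt_le_mul_sqrt {a b : ℝ} {n : ℕ} (hn : 1 ≤ n) (h : |a| ≤ n * |b|) :
    Real.sqrt (1 + a ^ 2) ≤ n * Real.sqrt (1 + b ^ 2) := by
  have h1 : (n:ℝ) * Real.sqrt (1 + b ^ 2) = Real.sqrt ((n:ℝ)^2 * (1 + b^2)) := by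
    rw [Real.sqrt_mul (by positivity), Real.sqrt_sq (by positivity)]
  rw [h1]
  apply Real.sqrt_le_sqrt
  have hn' : (1:ℝ) ≤ n := by exact_mod_cast hn
  nlinarith [sq_abs a, sq_abs b, abs_nonneg a, abs_nonneg b, mul_self_le_mul_self (abs_nonneg a) h]

lemma rpow_le_rpow_of_nonpos' {x y : ℝ≥0∞} {c : ℝ} (hc : c ≤ 0) (h : x ≤ y) : y ^ c ≤ x ^ c := by
  rw [← neg_neg c, ENNReal.rpow_neg y, ENNReal.rpow_neg x]
  exact ENNReal.inv_le_inv.mpr (ENNReal.rpow_le_rpow h (by linarith))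

lemma J_sum_le {N : ℕ} (hN : 1 ≤ N) (p : Fin N → ℤ) :
    J (∑ j, p j) ≤ (N : ℝ≥0∞) * Finset.univ.sup (fun j => J (p j)) := by
  have hne : (Finset.univ : Finset (Fin N)).Nonempty := ⟨⟨0, hN⟩, Finset.mem_univ _⟩
  obtain ⟨m, -, hm⟩ := Finset.exists_max_image Finset.univ (fun j => |p j|) hne
  have habs : |∑ j, p j| ≤ (N : ℤ) * |p m| := by
    calc |∑ j, p j| ≤ ∑ j, |p j| := Finset.abs_sum_le_sum_abs _ _
      _ ≤ ∑ _j : Fin N, |p m| := Finset.sum_le_sum (fun j _ => hm j (Finset.mem_univ j))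
      _ = (N : ℤ) * |p m| := by simp [Finset.sum_const, Finset.card_univ, mul_comm]
  have hreal : |((∑ j, p j : ℤ) : ℝ)| ≤ (N : ℕ) * |((p m : ℤ) : ℝ)| := by exact_mod_cast habs
  have h2 := sqrt_le_mul_sqrt hN hreal
  calc J (∑ j, p j) ≤ (N : ℝ≥0∞) * J (p m) := by
        rw [J, J, ← ENNReal.ofReal_natCast, ← ENNReal.ofReal_mul (by positivity)]
        exact ENNReal.ofReal_le_ofReal (by simpa [sq_abs] using h2)
    _ ≤ _ := mul_le_mul_right (Finset.le_sup (f := fun j => J (p j)) (Finset.mem_univ m)) _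

lemma one_le_JS {N : ℕ} (i : Fin N) (p : Fin N → ℤ) :
    1 ≤ Finset.univ.sup (fun j => J (p j)) :=
  le_trans (one_le_J (p i)) (Finset.le_sup (f := fun j => J (p j)) (Finset.mem_univ i))

lemma JS_ne_top {N : ℕ} (p : Fin N → ℤ) :
    Finset.univ.sup (fun j => J (p j)) ≠ ⊤ := by
  refine ne_top_of_lt ((Finset.sup_lt_iff (show (⊥ : ℝ≥0∞) < ⊤ by simp)).mpr ?_)
  exact fun j _ => lt_top_iff_ne_top.mpr (J_ne_top (p j))

lemma one_le_J_rpow {k : ℤ} {c : ℝ} (hc : 0 ≤ c) : 1 ≤ J k ^ c := by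
  calc (1 : ℝ≥0∞) = J k ^ (0 : ℝ) := by simp
    _ ≤ J k ^ c := ENNReal.rpow_le_rpow_of_exponent_le (one_le_J _) hc

lemma pointwiseA {s σ : ℝ} (hs : 0 < s) (hσ0 : 0 ≤ σ) (hσ1 : s - 1 ≤ σ) {N : ℕ} (hN : 1 ≤ N)
    (i : Fin N) (p : Fin N → ℤ) :
    J (∑ j, p j) ^ s * (Finset.univ.sup fun j => J (p j)) ^ (-1 : ℝ)
      ≤ (N : ℝ≥0∞) ^ s * (J (p i) ^ (s - 1) * ∏ l ∈ Finset.univ.erase i, J (p l) ^ σ) := by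
  have hne : (Finset.univ : Finset (Fin N)).Nonempty := ⟨i, Finset.mem_univ _⟩
  set S := Finset.univ.sup (fun j => J (p j)) with hSdef
  have hS1 : 1 ≤ S := one_le_JS i p
  have hS0 : S ≠ 0 := fun h => by simp [h] at hS1
  have hSt : S ≠ ⊤ := JS_ne_top p
  have hprod1 : (1 : ℝ≥0∞) ≤ ∏ l ∈ Finset.univ.erase i, J (p l) ^ σ :=
    Finset.one_le_prod' (fun l _ => one_le_J_rpow hσ0)
  have key : S ^ (s - 1) ≤ J (p i) ^ (s - 1) * ∏ l ∈ Finset.univ.erase i, J (p l) ^ σ := by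
    by_cases hcase : s ≤ 1
    · have h1 : S ^ (s - 1) ≤ J (p i) ^ (s - 1) :=
        rpow_le_rpow_of_nonpos' (by linarith) (Finset.le_sup (f := fun j => J (p j)) (Finset.mem_univ i))
      exact le_trans h1 (le_mul_of_one_le_right' hprod1)
    · push_neg at hcase
      obtain ⟨m, -, hmS⟩ := Finset.exists_mem_eq_sup Finset.univ hne (fun j => J (p j))
      by_cases hmi : m = i
      · rw [hSdef, hmS, hmi]
        exact le_mul_of_one_le_right' hprod1
      · have h1i : (1 : ℝ≥0∞) ≤ J (p i) ^ (s - 1) := one_le_J_rpow (by linarith)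
        have h2 : S ^ (s - 1) ≤ J (p m) ^ σ := by
          rw [hSdef, hmS]
          exact ENNReal.rpow_le_rpow_of_exponent_le (one_le_J _) hσ1
        have h3 : J (p m) ^ σ ≤ ∏ l ∈ Finset.univ.erase i, J (p l) ^ σ :=
          Finset.single_le_prod' (fun l _ => one_le_J_rpow hσ0)
            (Finset.mem_erase.mpr ⟨hmi, Finset.mem_univ m⟩)
        exact le_trans (le_trans h2 h3) (le_mul_of_one_le_left' h1i)
  calc J (∑ j, p j) ^ s * S ^ (-1 : ℝ)
      ≤ ((N : ℝ≥0∞) ^ s * S ^ s) * S ^ (-1 : ℝ) := by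
        refine mul_le_mul_left ?_ _
        calc J (∑ j, p j) ^ s ≤ ((N : ℝ≥0∞) * S) ^ s :=
              ENNReal.rpow_le_rpow (J_sum_le hN p) hs.le
          _ = _ := ENNReal.mul_rpow_of_nonneg _ _ hs.le
    _ = (N : ℝ≥0∞) ^ s * S ^ (s - 1) := by
        rw [mul_assoc, ← ENNReal.rpow_add _ _ hS0 hSt, show s + -1 = s - 1 by ring]
    _ ≤ _ := mul_le_mul_right key _

lemma tsum_pi_fin {α : Type*} : ∀ (n : ℕ) (f : Fin n → α → ℝ≥0∞),
    ∑' g : Fin n → α, ∏ j, f j (g j) = ∏ j, ∑' a, f j a := by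
  intro n
  induction n with
  | zero =>
      intro f
      rw [tsum_eq_single (default : Fin 0 → α) (fun b hb => absurd (Subsingleton.elim b default) hb)]
      simp
  | succ n ih =>
      intro f
      calc ∑' g : Fin (n + 1) → α, ∏ j, f j (g j)
          = ∑' y : α × (Fin n → α), ∏ j, f j ((Fin.consEquiv (fun _ => α)) y j) :=
            ((Fin.consEquiv (fun _ => α)).tsum_eq _).symm
        _ = ∑' a : α, ∑' g : Fin n → α, ∏ j, f j ((Fin.consEquiv (fun _ => α)) (a, g) j) :=
            ENNReal.tsum_prod'
        _ = ∑' a : α, ∑' g : Fin n → α, f 0 a * ∏ j : Fin n, f j.succ (g j) := by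
            congr 1; funext a; congr 1; funext g
            simp [Fin.prod_univ_succ, Fin.consEquiv]
        _ = (∑' a : α, f 0 a) * ∑' g : Fin n → α, ∏ j : Fin n, f j.succ (g j) := by
            rw [← ENNReal.tsum_mul_right]
            congr 1; funext a
            rw [ENNReal.tsum_mul_left]
        _ = (∑' a : α, f 0 a) * ∏ j : Fin n, ∑' a, f j.succ a := by rw [ih]
        _ = ∏ j, ∑' a, f j a := (Fin.prod_univ_succ (fun j => ∑' a, f j a)).symm

lemma tsum_pi_fintype {ι : Type*} [Fintype ι] {α : Type*} (f : ι → α → ℝ≥0∞) :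
    ∑' g : ι → α, ∏ j, f j (g j) = ∏ j, ∑' a, f j a := by
  obtain ⟨e⟩ : Nonempty (ι ≃ Fin (Fintype.card ι)) := ⟨Fintype.equivFin ι⟩
  let E : (Fin (Fintype.card ι) → α) ≃ (ι → α) := Equiv.arrowCongr e.symm (Equiv.refl α)
  have hE : ∀ (h : Fin (Fintype.card ι) → α) (j : ι), E h j = h (e j) := by
    intro h j; simp [E]
  rw [← E.tsum_eq]
  have h1 : ∀ h : Fin (Fintype.card ι) → α,
      ∏ j : ι, f j (E h j) = ∏ m, f (e.symm m) (h m) := by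
    intro h
    rw [← Equiv.prod_comp e.symm (fun j => f j (E h j))]
    refine Finset.prod_congr rfl fun m _ => ?_
    rw [hE]
    simp
  calc ∑' h : Fin (Fintype.card ι) → α, ∏ j : ι, f j (E h j)
      = ∑' h : Fin (Fintype.card ι) → α, ∏ m, f (e.symm m) (h m) := by
        congr 1; funext h; exact h1 h
    _ = ∏ m, ∑' a, f (e.symm m) a := tsum_pi_fin _ _
    _ = ∏ j, ∑' a, f j a := Equiv.prod_comp e.symm (fun j => ∑' a, f j a)

lemma tsum_J_rpow_neg {t : ℝ} (ht : 1 < t) : ∑' k : ℤ, J k ^ (-t) ≠ ⊤ := by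
  have ht0 : (0:ℝ) < t := by linarith
  set g : ℤ → ℝ := fun k => (Real.sqrt (1 + (k:ℝ) ^ 2)) ^ (-t) with hg
  have hgnn : ∀ k, 0 ≤ g k := fun k => Real.rpow_nonneg (Real.sqrt_nonneg _) _
  have hnat : Summable (fun n : ℕ => g n) := by
    rw [← summable_nat_add_iff 1]
    have hbase : Summable (fun n : ℕ => ((n : ℝ) + 1) ^ (-t)) := by
      have := (summable_nat_add_iff (f := fun n : ℕ => (n : ℝ) ^ (-t)) 1).2
        (Real.summable_nat_rpow.2 (by linarith))
      simpa using this
    refine Summable.of_nonneg_of_le (fun n => hgnn _) (fun n => ?_) hbase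
    have h1 : ((n : ℝ) + 1) ≤ Real.sqrt (1 + ((n + 1 : ℕ) : ℝ) ^ 2) := by
      rw [show ((n:ℝ)+1) = Real.sqrt (((n:ℝ)+1)^2) by rw [Real.sqrt_sq (by positivity)]]
      apply Real.sqrt_le_sqrt
      push_cast
      nlinarith
    exact Real.rpow_le_rpow_of_nonpos (by positivity) h1 (by linarith)
  have hsum : Summable g := by
    rw [summable_int_iff_summable_nat_and_neg]
    constructor
    · exact hnat
    · refine hnat.congr fun n => ?_
      simp [hg]
  have hrw : ∀ k : ℤ, J k ^ (-t) = ENNReal.ofReal (g k) := by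
    intro k
    rw [J, ENNReal.ofReal_rpow_of_pos (by positivity)]
  rw [funext hrw] at *
  rw [← ENNReal.ofReal_tsum_of_nonneg hgnn hsum]
  exact ENNReal.ofReal_ne_top

lemma tsum_CS (f g : ℤ → ℝ≥0∞) :
    ∑' k, f k * g k ≤ (∑' k, f k ^ (2:ℝ)) ^ ((1:ℝ)/2) * (∑' k, g k ^ (2:ℝ)) ^ ((1:ℝ)/2) := by
  have hconj : Real.HolderConjugate 2 2 := Real.HolderConjugate.two_two
  have h := ENNReal.lintegral_mul_le_Lp_mul_Lq (MeasureTheory.Measure.count (α := ℤ)) hconj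
    (measurable_of_countable f).aemeasurable (measurable_of_countable g).aemeasurable
  simpa [MeasureTheory.lintegral_count] using h

lemma minkowski_sq {β : Type*} (f : ℤ → ℝ≥0∞) (a : β → ℝ≥0∞) (b : β → ℤ) :
    ∑' k : ℤ, (∑' m : β, a m * f (k - b m)) ^ (2:ℕ)
      ≤ 2 * (∑' m, a m) ^ (2:ℕ) * ∑' x, f x ^ (2:ℕ) := by
  obtain ⟨S, hS⟩ : ∃ S, (∑' x : ℤ, f x ^ (2:ℕ)) = S := ⟨_, rfl⟩
  rw [hS]
  have htrans : ∀ c : ℤ, ∑' k : ℤ, f (k - c) ^ (2:ℕ) = S :=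
    fun c => ((Equiv.subRight c).tsum_eq (fun x => f x ^ (2:ℕ))).trans hS
  have key : ∀ c d : ℤ, ∑' k : ℤ, f (k - c) * f (k - d) ≤ 2 * S := by
    intro c d
    have h1 : ∀ k : ℤ, f (k - c) * f (k - d) ≤ f (k - c) ^ (2:ℕ) + f (k - d) ^ (2:ℕ) := by
      intro k
      rcases le_total (f (k - c)) (f (k - d)) with h | h
      · calc f (k - c) * f (k - d) ≤ f (k - d) * f (k - d) := mul_le_mul_left h _
          _ = f (k - d) ^ (2:ℕ) := (sq _).symm
          _ ≤ _ := le_add_self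
      · calc f (k - c) * f (k - d) ≤ f (k - c) * f (k - c) := mul_le_mul_right h _
          _ = f (k - c) ^ (2:ℕ) := (sq _).symm
          _ ≤ _ := le_add_right (le_refl _)
    calc ∑' k : ℤ, f (k - c) * f (k - d)
        ≤ ∑' k : ℤ, (f (k - c) ^ (2:ℕ) + f (k - d) ^ (2:ℕ)) := ENNReal.tsum_le_tsum h1
      _ = (∑' k : ℤ, f (k - c) ^ (2:ℕ)) + ∑' k : ℤ, f (k - d) ^ (2:ℕ) := ENNReal.tsum_add
      _ = 2 * S := by rw [htrans, htrans, two_mul]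
  calc ∑' k : ℤ, (∑' m : β, a m * f (k - b m)) ^ (2:ℕ)
      = ∑' k : ℤ, ∑' m : β, ∑' m' : β, (a m * f (k - b m)) * (a m' * f (k - b m')) := by
        congr 1; funext k
        rw [pow_two, ← ENNReal.tsum_mul_right]
        congr 1; funext m
        rw [← ENNReal.tsum_mul_left]
    _ = ∑' m : β, ∑' m' : β, ∑' k : ℤ, (a m * f (k - b m)) * (a m' * f (k - b m')) := by
        rw [ENNReal.tsum_comm]
        congr 1; funext m
        rw [ENNReal.tsum_comm]
    _ ≤ ∑' m : β, ∑' m' : β, (a m * a m') * (2 * S) := by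
        refine ENNReal.tsum_le_tsum (fun m => ENNReal.tsum_le_tsum (fun m' => ?_))
        calc ∑' k : ℤ, (a m * f (k - b m)) * (a m' * f (k - b m'))
            = (a m * a m') * ∑' k : ℤ, f (k - b m) * f (k - b m') := by
              rw [← ENNReal.tsum_mul_left]
              congr 1; funext k; ring
          _ ≤ (a m * a m') * (2 * S) := mul_le_mul_right (key _ _) _
    _ = 2 * (∑' m, a m) ^ (2:ℕ) * S := by
        calc ∑' m : β, ∑' m' : β, (a m * a m') * (2 * S)
            = ∑' m : β, a m * ((∑' m' : β, a m') * (2 * S)) := by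
              congr 1; funext m
              rw [← ENNReal.tsum_mul_right, ← ENNReal.tsum_mul_left]
              congr 1; funext m'; ring
          _ = (∑' m : β, a m) * ((∑' m' : β, a m') * (2 * S)) := ENNReal.tsum_mul_right
          _ = 2 * (∑' m, a m) ^ (2:ℕ) * S := by ring

lemma conv_bound {N : ℕ} (i : Fin N) (F : Fin N → ℤ → ℝ≥0∞) :
    ∑' k : ℤ, (∑' p : Fin N → ℤ, if (∑ j, p j) = k then ∏ l, F l (p l) else 0) ^ (2:ℕ)
      ≤ 2 * (∏ l ∈ Finset.univ.erase i, ∑' x : ℤ, F l x) ^ (2:ℕ) * ∑' x : ℤ, F i x ^ (2:ℕ) := by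
  classical
  set a : ({j : Fin N // j ≠ i} → ℤ) → ℝ≥0∞ :=
    fun r => ∏ j : {j : Fin N // j ≠ i}, F j (r j) with ha
  set bf : ({j : Fin N // j ≠ i} → ℤ) → ℤ := fun r => ∑ j, r j with hbf
  have hmem : ∀ x : Fin N, x ∈ Finset.univ.erase i ↔ x ≠ i := by
    intro x; simp [Finset.mem_erase]
  have step1 : ∀ k : ℤ,
      (∑' p : Fin N → ℤ, if (∑ j, p j) = k then ∏ l, F l (p l) else 0)
        = ∑' r : {j : Fin N // j ≠ i} → ℤ, a r * F i (k - bf r) := by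
    intro k
    set P := Equiv.piSplitAt i (fun _ : Fin N => ℤ) with hP
    rw [← P.symm.tsum_eq (fun p => if (∑ j, p j) = k then ∏ l, F l (p l) else 0)]
    rw [ENNReal.tsum_prod']
    have hqi : ∀ (x : ℤ) (r : {j : Fin N // j ≠ i} → ℤ), (P.symm (x, r)) i = x := by
      intro x r; simp [hP]
    have hqj : ∀ (x : ℤ) (r : {j : Fin N // j ≠ i} → ℤ) (l : Fin N) (hl : l ≠ i),
        (P.symm (x, r)) l = r ⟨l, hl⟩ := by
      intro x r l hl; simp [hP, Equiv.piSplitAt, hl]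
    rw [ENNReal.tsum_comm]
    congr 1; funext r
    have hsum : ∀ x : ℤ, (∑ j, (P.symm (x, r)) j) = x + bf r := by
      intro x
      rw [← Finset.add_sum_erase _ _ (Finset.mem_univ i), hqi]
      congr 1
      rw [Finset.sum_subtype _ hmem (fun l => (P.symm (x, r)) l)]
      exact Finset.sum_congr rfl fun j _ => hqj x r j j.2
    have hprod : ∀ x : ℤ, (∏ l, F l ((P.symm (x, r)) l)) = F i x * a r := by
      intro x
      rw [← Finset.mul_prod_erase _ _ (Finset.mem_univ i), hqi]
      congr 1
      rw [Finset.prod_subtype _ hmem (fun l => F l ((P.symm (x, r)) l))]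
      exact Finset.prod_congr rfl fun j _ => by rw [hqj x r j j.2]
    rw [tsum_eq_single (k - bf r) ?_]
    · rw [hsum, hprod]
      simp [mul_comm]
    · intro x hx
      rw [hsum]
      rw [if_neg (by omega)]
  calc ∑' k : ℤ, (∑' p : Fin N → ℤ, if (∑ j, p j) = k then ∏ l, F l (p l) else 0) ^ (2:ℕ)
      = ∑' k : ℤ, (∑' r : {j : Fin N // j ≠ i} → ℤ, a r * F i (k - bf r)) ^ (2:ℕ) := by
        congr 1; funext k; rw [step1]
    _ ≤ 2 * (∑' r : {j : Fin N // j ≠ i} → ℤ, a r) ^ (2:ℕ) * ∑' x : ℤ, F i x ^ (2:ℕ) :=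
        minkowski_sq (F i) a bf
    _ = 2 * (∏ l ∈ Finset.univ.erase i, ∑' x : ℤ, F l x) ^ (2:ℕ) * ∑' x : ℤ, F i x ^ (2:ℕ) := by
        congr 2
        rw [ha, tsum_pi_fintype]
        rw [Finset.prod_subtype _ hmem (fun l => ∑' x : ℤ, F l x)]

lemma rt (x : ℝ≥0∞) : (x ^ (2:ℕ)) ^ ((1:ℝ)/2) = x := by
  rw [← ENNReal.rpow_natCast x 2, ← ENNReal.rpow_mul]
  norm_num

lemma rt' (x : ℝ≥0∞) : (x ^ ((1:ℝ)/2)) ^ (2:ℕ) = x := by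
  rw [← ENNReal.rpow_natCast (x ^ ((1:ℝ)/2)) 2, ← ENNReal.rpow_mul]
  norm_num

lemma Jsq (k : ℤ) (c : ℝ) : (J k ^ c) ^ (2:ℕ) = J k ^ (2 * c) := by
  rw [← ENNReal.rpow_natCast (J k ^ c) 2, ← ENNReal.rpow_mul]
  congr 1
  push_cast
  ring


/-- Multilinear estimate: the `⟨k_max⟩⁻¹`-weighted convolution is bounded in `l²_s`
by `‖v_i‖_{H^{s-1}}` times the `H^s` norms of the other factors, for `s > 1/2`. -/
theorem multilinear_one_gain_estimate (s : ℝ) (hs : 1 / 2 < s) (N : ℕ) (hN : 1 ≤ N)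
    (i : Fin N) :
    ∃ C : ℝ, 0 < C ∧ ∀ v : Fin N → ℤ → ℝ≥0,
      (∑' k : ℤ, J k ^ (2 * s) *
          (∑' p : Fin N → ℤ, if (∑ j, p j) = k then
              (Finset.univ.sup fun j => J (p j)) ^ (-1 : ℝ) * ∏ l, (v l (p l) : ℝ≥0∞)
            else 0) ^ (2 : ℕ)) ^ ((1 : ℝ) / 2)
      ≤ ENNReal.ofReal C *
          ((∑' k : ℤ, J k ^ (2 * (s - 1)) * (v i k : ℝ≥0∞) ^ (2 : ℕ)) ^ ((1 : ℝ) / 2) *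
            ∏ l ∈ Finset.univ.erase i,
              (∑' k : ℤ, J k ^ (2 * s) * (v l k : ℝ≥0∞) ^ (2 : ℕ)) ^ ((1 : ℝ) / 2)) := by
  classical
  have hs0 : (0:ℝ) < s := by linarith
  set δ : ℝ := min (1/2) ((2*s - 1)/4) with hδ
  have hδpos : 0 < δ := lt_min (by norm_num) (by linarith)
  have hδle : δ ≤ 1/2 := min_le_left _ _
  have hδle2 : δ ≤ (2*s - 1)/4 := min_le_right _ _
  set σ : ℝ := s - 1/2 - δ with hσ
  have hσ0 : 0 ≤ σ := by rw [hσ]; linarith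
  have hσ1 : s - 1 ≤ σ := by rw [hσ]; linarith
  have hts : 1 < 2*(s - σ) := by rw [hσ]; linarith
  set Z : ℝ≥0∞ := ∑' k : ℤ, J k ^ (-(2*(s - σ))) with hZ
  have hZt : Z ≠ ⊤ := tsum_J_rpow_neg hts
  set K : ℝ≥0∞ := (2:ℝ≥0∞) ^ ((1:ℝ)/2) *
      ((N:ℝ≥0∞) ^ s * ∏ _l ∈ Finset.univ.erase i, Z ^ ((1:ℝ)/2)) with hK
  have hKt : K ≠ ⊤ := by
    apply ENNReal.mul_ne_top
    · exact ENNReal.rpow_ne_top_of_nonneg (by norm_num) (by norm_num)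
    apply ENNReal.mul_ne_top
    · exact ENNReal.rpow_ne_top_of_nonneg hs0.le (ENNReal.natCast_ne_top N)
    · refine (ENNReal.prod_lt_top ?_).ne
      exact fun l _ => (ENNReal.rpow_ne_top_of_nonneg (by norm_num) hZt).lt_top
  refine ⟨K.toReal + 1, by positivity, ?_⟩
  have hKC : K ≤ ENNReal.ofReal (K.toReal + 1) := by
    calc K = ENNReal.ofReal K.toReal := (ENNReal.ofReal_toReal hKt).symm
      _ ≤ _ := ENNReal.ofReal_le_ofReal (by linarith [ENNReal.toReal_nonneg (a := K)])
  intro v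
  set F : Fin N → ℤ → ℝ≥0∞ :=
    fun l k => J k ^ (if l = i then s - 1 else σ) * (v l k : ℝ≥0∞) with hF
  -- pointwise bound
  have hpoint : ∀ k : ℤ,
      J k ^ (2 * s) *
          (∑' p : Fin N → ℤ, if (∑ j, p j) = k then
              (Finset.univ.sup fun j => J (p j)) ^ (-1 : ℝ) * ∏ l, (v l (p l) : ℝ≥0∞)
            else 0) ^ (2 : ℕ)
        ≤ ((N:ℝ≥0∞) ^ s *
            (∑' p : Fin N → ℤ, if (∑ j, p j) = k then ∏ l, F l (p l) else 0)) ^ (2:ℕ) := by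
    intro k
    have h1 : J k ^ s *
        (∑' p : Fin N → ℤ, if (∑ j, p j) = k then
            (Finset.univ.sup fun j => J (p j)) ^ (-1 : ℝ) * ∏ l, (v l (p l) : ℝ≥0∞)
          else 0)
        ≤ (N:ℝ≥0∞) ^ s *
            (∑' p : Fin N → ℤ, if (∑ j, p j) = k then ∏ l, F l (p l) else 0) := by
      rw [← ENNReal.tsum_mul_left, ← ENNReal.tsum_mul_left]
      refine ENNReal.tsum_le_tsum (fun p => ?_)
      by_cases hpk : (∑ j, p j) = k
      · rw [if_pos hpk, if_pos hpk, ← hpk]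
        have h2 := pointwiseA hs0 hσ0 hσ1 hN i p
        have h3 : (∏ l, F l (p l)) =
            (J (p i) ^ (s - 1) * ∏ l ∈ Finset.univ.erase i, J (p l) ^ σ) *
              ∏ l, (v l (p l) : ℝ≥0∞) := by
          rw [hF]
          rw [Finset.prod_mul_distrib]
          congr 1
          rw [← Finset.mul_prod_erase Finset.univ
            (fun l => J (p l) ^ (if l = i then s - 1 else σ)) (Finset.mem_univ i)]
          rw [if_pos rfl]
          congr 1
          exact Finset.prod_congr rfl fun l hl => by
            rw [if_neg (Finset.mem_erase.mp hl).1]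
        calc J (∑ j, p j) ^ s *
            ((Finset.univ.sup fun j => J (p j)) ^ (-1 : ℝ) * ∏ l, (v l (p l) : ℝ≥0∞))
            = (J (∑ j, p j) ^ s * (Finset.univ.sup fun j => J (p j)) ^ (-1 : ℝ)) *
                ∏ l, (v l (p l) : ℝ≥0∞) := by ring
          _ ≤ ((N:ℝ≥0∞) ^ s *
                (J (p i) ^ (s - 1) * ∏ l ∈ Finset.univ.erase i, J (p l) ^ σ)) *
                ∏ l, (v l (p l) : ℝ≥0∞) := mul_le_mul_left h2 _
          _ = (N:ℝ≥0∞) ^ s * ∏ l, F l (p l) := by rw [h3]; ring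
      · simp [if_neg hpk]
    calc J k ^ (2 * s) *
        (∑' p : Fin N → ℤ, if (∑ j, p j) = k then
            (Finset.univ.sup fun j => J (p j)) ^ (-1 : ℝ) * ∏ l, (v l (p l) : ℝ≥0∞)
          else 0) ^ (2 : ℕ)
        = (J k ^ s *
            (∑' p : Fin N → ℤ, if (∑ j, p j) = k then
              (Finset.univ.sup fun j => J (p j)) ^ (-1 : ℝ) * ∏ l, (v l (p l) : ℝ≥0∞)
            else 0)) ^ (2:ℕ) := by rw [mul_pow, Jsq]
      _ ≤ _ := by rw [pow_two, pow_two]; exact mul_le_mul' h1 h1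
  -- norms of F
  have hFi : (∑' x : ℤ, F i x ^ (2:ℕ)) =
      ∑' k : ℤ, J k ^ (2 * (s - 1)) * (v i k : ℝ≥0∞) ^ (2 : ℕ) := by
    congr 1; funext x
    rw [hF]
    simp only [eq_self_iff_true, if_true]
    rw [mul_pow, Jsq]
  have hW : ∀ l ∈ Finset.univ.erase i,
      (∑' x : ℤ, F l x) ≤ Z ^ ((1:ℝ)/2) *
        (∑' k : ℤ, J k ^ (2 * s) * (v l k : ℝ≥0∞) ^ (2 : ℕ)) ^ ((1:ℝ)/2) := by
    intro l hl
    have hli : l ≠ i := (Finset.mem_erase.mp hl).1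
    have e1 : (∑' x : ℤ, F l x) =
        ∑' x : ℤ, (J x ^ (σ - s)) * (J x ^ s * (v l x : ℝ≥0∞)) := by
      congr 1; funext x
      rw [hF]
      simp only [if_neg hli]
      rw [← mul_assoc, ← ENNReal.rpow_add _ _ (J_ne_zero x) (J_ne_top x), sub_add_cancel]
    rw [e1]
    refine le_trans (tsum_CS _ _) ?_
    have e2 : (∑' x : ℤ, (J x ^ (σ - s)) ^ (2:ℝ)) = Z := by
      rw [hZ]
      congr 1; funext x
      rw [← ENNReal.rpow_mul]
      congr 1
      ring
    have e3 : (∑' x : ℤ, (J x ^ s * (v l x : ℝ≥0∞)) ^ (2:ℝ)) =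
        ∑' k : ℤ, J k ^ (2 * s) * (v l k : ℝ≥0∞) ^ (2 : ℕ) := by
      congr 1; funext x
      rw [show (2:ℝ) = ((2:ℕ):ℝ) by norm_num, ENNReal.rpow_natCast, mul_pow, Jsq]
      norm_num
    rw [e2, e3]
  -- main estimate
  have big : (∑' k : ℤ, J k ^ (2 * s) *
        (∑' p : Fin N → ℤ, if (∑ j, p j) = k then
            (Finset.univ.sup fun j => J (p j)) ^ (-1 : ℝ) * ∏ l, (v l (p l) : ℝ≥0∞)
          else 0) ^ (2 : ℕ))
      ≤ (K * ((∑' k : ℤ, J k ^ (2 * (s - 1)) * (v i k : ℝ≥0∞) ^ (2 : ℕ)) ^ ((1 : ℝ) / 2) *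
          ∏ l ∈ Finset.univ.erase i,
            (∑' k : ℤ, J k ^ (2 * s) * (v l k : ℝ≥0∞) ^ (2 : ℕ)) ^ ((1 : ℝ) / 2))) ^ (2:ℕ) := by
    calc (∑' k : ℤ, J k ^ (2 * s) *
        (∑' p : Fin N → ℤ, if (∑ j, p j) = k then
            (Finset.univ.sup fun j => J (p j)) ^ (-1 : ℝ) * ∏ l, (v l (p l) : ℝ≥0∞)
          else 0) ^ (2 : ℕ))
        ≤ ∑' k : ℤ, ((N:ℝ≥0∞) ^ s *
            (∑' p : Fin N → ℤ, if (∑ j, p j) = k then ∏ l, F l (p l) else 0)) ^ (2:ℕ) :=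
          ENNReal.tsum_le_tsum hpoint
      _ = ((N:ℝ≥0∞) ^ s) ^ (2:ℕ) * ∑' k : ℤ,
            (∑' p : Fin N → ℤ, if (∑ j, p j) = k then ∏ l, F l (p l) else 0) ^ (2:ℕ) := by
          rw [← ENNReal.tsum_mul_left]
          congr 1; funext k
          rw [mul_pow]
      _ ≤ ((N:ℝ≥0∞) ^ s) ^ (2:ℕ) *
            (2 * (∏ l ∈ Finset.univ.erase i, ∑' x : ℤ, F l x) ^ (2:ℕ) *
              ∑' x : ℤ, F i x ^ (2:ℕ)) := mul_le_mul_right (conv_bound i F) _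
      _ ≤ ((N:ℝ≥0∞) ^ s) ^ (2:ℕ) *
            (2 * (∏ l ∈ Finset.univ.erase i, Z ^ ((1:ℝ)/2) *
                (∑' k : ℤ, J k ^ (2 * s) * (v l k : ℝ≥0∞) ^ (2 : ℕ)) ^ ((1:ℝ)/2)) ^ (2:ℕ) *
              ∑' k : ℤ, J k ^ (2 * (s - 1)) * (v i k : ℝ≥0∞) ^ (2 : ℕ)) := by
          rw [hFi]
          exact mul_le_mul_right (mul_le_mul_left
            (mul_le_mul_right (pow_le_pow_left' (Finset.prod_le_prod' hW) 2) 2) _) _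
      _ = _ := by
          rw [Finset.prod_mul_distrib, hK]
          simp only [mul_pow, rt']
          ring
  calc (∑' k : ℤ, J k ^ (2 * s) *
        (∑' p : Fin N → ℤ, if (∑ j, p j) = k then
            (Finset.univ.sup fun j => J (p j)) ^ (-1 : ℝ) * ∏ l, (v l (p l) : ℝ≥0∞)
          else 0) ^ (2 : ℕ)) ^ ((1 : ℝ) / 2)
      ≤ ((K * ((∑' k : ℤ, J k ^ (2 * (s - 1)) * (v i k : ℝ≥0∞) ^ (2 : ℕ)) ^ ((1 : ℝ) / 2) *
          ∏ l ∈ Finset.univ.erase i,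
            (∑' k : ℤ, J k ^ (2 * s) * (v l k : ℝ≥0∞) ^ (2 : ℕ)) ^ ((1 : ℝ) / 2))) ^ (2:ℕ)) ^
              ((1 : ℝ) / 2) := ENNReal.rpow_le_rpow big (by norm_num)
    _ = K * ((∑' k : ℤ, J k ^ (2 * (s - 1)) * (v i k : ℝ≥0∞) ^ (2 : ℕ)) ^ ((1 : ℝ) / 2) *
          ∏ l ∈ Finset.univ.erase i,
            (∑' k : ℤ, J k ^ (2 * s) * (v l k : ℝ≥0∞) ^ (2 : ℕ)) ^ ((1 : ℝ) / 2)) := rt _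
    _ ≤ _ := mul_le_mul_left hKC _
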